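/- Let n ≥ 1, let U ⊆ ℝⁿ be open, and let b : ℝⁿ → ℝ be a smooth (C^∞) function such that ‖∇b(x)‖ = 1 for every x ∈ U. Define functions g_k on U inductively by g₀ = Δb and g_{k+1}(x) = ⟨∇g_k(x), ∇b(x)⟩. Then for every natural number J ≥ 0 and every x ∈ U, g_J(x) = (−1)^J · J! · tr(H(x)^{J+1}), where H(x) is the Hessian matrix of b at x. -/

import Mathlib

/-- The `i`-th partial derivative `∂ᵢ b` at `x`. -/
noncomputable def pd {n : ℕ} (b : (Fin n → ℝ) → ℝ) (i : Fin n) (x : Fin n → ℝ) : ℝ :=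
  fderiv ℝ b x (Pi.single i 1)

/-- The Hessian matrix of `b` at `x`, with entries `∂ᵢ∂ⱼ b (x)`. -/
noncomputable def hess {n : ℕ} (b : (Fin n → ℝ) → ℝ) (x : Fin n → ℝ) :
    Matrix (Fin n) (Fin n) ℝ :=
  Matrix.of fun i j => pd (pd b j) i x

/-- Iterated derivatives of the mean curvature `Δb = tr H` along the unit normal
direction `∇b`:  `g₀ = Δb` and `g_{k+1} = ⟨∇g_k, ∇b⟩`. -/
noncomputable def normalIter {n : ℕ} (b : (Fin n → ℝ) → ℝ) : ℕ → (Fin n → ℝ) → ℝ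
  | 0 => fun x => Matrix.trace (hess b x)
  | J + 1 => fun x => ∑ i, pd (normalIter b J) i x * pd b i x

section aux
variable {n : ℕ}

lemma pd_contDiff {f : (Fin n → ℝ) → ℝ} (hf : ContDiff ℝ (⊤ : ℕ∞) f) (i : Fin n) :
    ContDiff ℝ (⊤ : ℕ∞) (pd f i) := by
  have h : ContDiff ℝ (⊤ : ℕ∞) (fderiv ℝ f) := hf.fderiv_right (by simp)
  exact h.clm_apply contDiff_const

lemma diff_of_contDiff {f : (Fin n → ℝ) → ℝ} (hf : ContDiff ℝ (⊤ : ℕ∞) f)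
    (x : Fin n → ℝ) : DifferentiableAt ℝ f x :=
  (hf.differentiable (by simp)).differentiableAt

lemma pd_mul {f g : (Fin n → ℝ) → ℝ} {x : Fin n → ℝ} (hf : DifferentiableAt ℝ f x)
    (hg : DifferentiableAt ℝ g x) (i : Fin n) :
    pd (fun y => f y * g y) i x = pd f i x * g x + f x * pd g i x := by
  unfold pd
  rw [fderiv_fun_mul hf hg]
  simp
  ring

lemma pd_sum {ι : Type*} (s : Finset ι) {f : ι → (Fin n → ℝ) → ℝ} {x : Fin n → ℝ}
    (hf : ∀ j ∈ s, DifferentiableAt ℝ (f j) x) (i : Fin n) :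
    pd (fun y => ∑ j ∈ s, f j y) i x = ∑ j ∈ s, pd (f j) i x := by
  unfold pd
  rw [fderiv_fun_sum hf]
  simp

lemma pd_congr {f g : (Fin n → ℝ) → ℝ} {x : Fin n → ℝ} (h : f =ᶠ[nhds x] g) (i : Fin n) :
    pd f i x = pd g i x := by
  unfold pd; rw [h.fderiv_eq]

lemma pd_const (c : ℝ) (i : Fin n) (x : Fin n → ℝ) : pd (fun _ => c) i x = 0 := by
  unfold pd; simp

lemma pd_comm {f : (Fin n → ℝ) → ℝ} (hf : ContDiff ℝ (⊤ : ℕ∞) f) (i j : Fin n)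
    (x : Fin n → ℝ) : pd (pd f i) j x = pd (pd f j) i x := by
  have h2 : ContDiff ℝ (⊤ : ℕ∞) (fderiv ℝ f) := hf.fderiv_right (by simp)
  have hd : DifferentiableAt ℝ (fderiv ℝ f) x :=
    (h2.differentiable (by simp)).differentiableAt
  have key : ∀ v w : Fin n → ℝ,
      fderiv ℝ (fun y => fderiv ℝ f y v) x w = fderiv ℝ (fderiv ℝ f) x w v := by
    intro v w
    rw [fderiv_clm_apply hd (differentiableAt_const v)]
    simp
  have hsymm : IsSymmSndFDerivAt ℝ f x := by
    apply ContDiffAt.isSymmSndFDerivAt hf.contDiffAt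
    have : ((2:ℕ∞) : WithTop ℕ∞) ≤ ((⊤:ℕ∞) : WithTop ℕ∞) := WithTop.coe_le_coe.2 le_top
    simpa using this
  unfold pd
  rw [key, key, hsymm.eq]

end aux

section main
variable {n : ℕ} {b : (Fin n → ℝ) → ℝ}

lemma hess_apply (x : Fin n → ℝ) (i j : Fin n) : hess b x i j = pd (pd b j) i x := rfl

lemma hess_entry_contDiff (hb : ContDiff ℝ (⊤ : ℕ∞) b) (i j : Fin n) :
    ContDiff ℝ (⊤ : ℕ∞) (fun x => hess b x i j) :=
  pd_contDiff (pd_contDiff hb j) i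

lemma hess_symm (hb : ContDiff ℝ (⊤ : ℕ∞) b) (x : Fin n → ℝ) (i j : Fin n) :
    hess b x i j = hess b x j i := pd_comm hb j i x

lemma pow_entry_contDiff (hb : ContDiff ℝ (⊤ : ℕ∞) b) (m : ℕ) (j k : Fin n) :
    ContDiff ℝ (⊤ : ℕ∞) (fun x => (hess b x ^ m) j k) := by
  induction m generalizing j k with
  | zero =>
    simp only [pow_zero, Matrix.one_apply]
    exact contDiff_const
  | succ m ih =>
    have : (fun x => (hess b x ^ (m + 1)) j k)
        = fun x => ∑ i, (hess b x ^ m) j i * hess b x i k := by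
      funext x
      rw [pow_succ, Matrix.mul_apply]
    rw [this]
    exact ContDiff.sum fun i _ => (ih j i).mul (hess_entry_contDiff hb i k)

variable {U : Set (Fin n → ℝ)}

/-- First derivative of the eikonal identity: `H ∇b = 0` on `U`. -/
lemma eik1 (hb : ContDiff ℝ (⊤ : ℕ∞) b) (hU : IsOpen U)
    (heik : ∀ x ∈ U, ∑ k, (pd b k x) ^ 2 = 1) {x : Fin n → ℝ} (hx : x ∈ U) (k : Fin n) :
    ∑ l, pd b l x * pd (pd b l) k x = 0 := by
  have hev : (fun y => ∑ l, pd b l y * pd b l y) =ᶠ[nhds x] (fun _ => 1) := by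
    filter_upwards [hU.mem_nhds hx] with y hy
    simpa [sq] using heik y hy
  have h0 : pd (fun y => ∑ l, pd b l y * pd b l y) k x = 0 := by
    rw [pd_congr hev, pd_const]
  rw [pd_sum Finset.univ (fun l _ =>
    ((pd_contDiff hb l).mul (pd_contDiff hb l)).differentiable
      (by simp) |>.differentiableAt) k] at h0
  have : ∀ l : Fin n, pd (fun y => pd b l y * pd b l y) k x
      = 2 * (pd b l x * pd (pd b l) k x) := by
    intro l
    rw [pd_mul (diff_of_contDiff (pd_contDiff hb l) x) (diff_of_contDiff (pd_contDiff hb l) x)]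
    ring
  rw [Finset.sum_congr rfl fun l _ => this l, ← Finset.mul_sum] at h0
  linarith [h0]

/-- Second derivative of the eikonal identity. -/
lemma eik2 (hb : ContDiff ℝ (⊤ : ℕ∞) b) (hU : IsOpen U)
    (heik : ∀ x ∈ U, ∑ k, (pd b k x) ^ 2 = 1) {x : Fin n → ℝ} (hx : x ∈ U) (j k : Fin n) :
    ∑ l, pd b l x * pd (pd (pd b l) k) j x = -((hess b x ^ 2) j k) := by
  have hev : (fun y => ∑ l, pd b l y * pd (pd b l) k y) =ᶠ[nhds x] (fun _ => 0) := by
    filter_upwards [hU.mem_nhds hx] with y hy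
    exact eik1 hb hU heik hy k
  have h0 : pd (fun y => ∑ l, pd b l y * pd (pd b l) k y) j x = 0 := by
    rw [pd_congr hev, pd_const]
  rw [pd_sum Finset.univ (fun l _ =>
    ((pd_contDiff hb l).mul (pd_contDiff (pd_contDiff hb l) k)).differentiable
      (by simp) |>.differentiableAt) j] at h0
  have hexp : ∀ l : Fin n, pd (fun y => pd b l y * pd (pd b l) k y) j x
      = pd (pd b l) j x * pd (pd b l) k x + pd b l x * pd (pd (pd b l) k) j x := fun l =>
    pd_mul (diff_of_contDiff (pd_contDiff hb l) x)
      (diff_of_contDiff (pd_contDiff (pd_contDiff hb l) k) x) j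
  rw [Finset.sum_congr rfl fun l _ => hexp l, Finset.sum_add_distrib] at h0
  have hsq : ∑ l, pd (pd b l) j x * pd (pd b l) k x = (hess b x ^ 2) j k := by
    rw [sq, Matrix.mul_apply]
    refine Finset.sum_congr rfl fun l _ => ?_
    rw [hess_apply, hess_apply, ← hess_apply x k l, hess_symm hb x k l, hess_apply]
  rw [hsq] at h0
  linarith [h0]

/-- Third derivatives rearranged: `∂ₗ H_{jk} = ∂ⱼ ∂ₖ ∂ₗ b`. -/
lemma third_swap (hb : ContDiff ℝ (⊤ : ℕ∞) b) (x : Fin n → ℝ) (j k l : Fin n) :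
    pd (fun y => hess b y j k) l x = pd (pd (pd b l) k) j x := by
  have h1 : (fun y => hess b y j k) = pd (pd b k) j := rfl
  rw [h1, pd_comm (pd_contDiff hb k) j l x]
  have h2 : pd (pd b k) l = pd (pd b l) k := funext fun y => pd_comm hb k l y
  rw [h2]

end main

section key
variable {n : ℕ} {b : (Fin n → ℝ) → ℝ} {U : Set (Fin n → ℝ)}

lemma keyF (hb : ContDiff ℝ (⊤ : ℕ∞) b) (hU : IsOpen U)
    (heik : ∀ x ∈ U, ∑ k, (pd b k x) ^ 2 = 1) :
    ∀ s : ℕ, ∀ x ∈ U, ∀ j k : Fin n,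
      ∑ l, pd b l x * pd (fun y => (hess b y ^ (s + 1)) j k) l x
        = -((s + 1 : ℕ) : ℝ) * (hess b x ^ (s + 2)) j k := by
  intro s
  induction s with
  | zero =>
    intro x hx j k
    have h1 : ∀ l : Fin n, pd (fun y => (hess b y ^ 1) j k) l x
        = pd (pd (pd b l) k) j x := by
      intro l
      have : (fun y => (hess b y ^ 1) j k) = fun y => hess b y j k := by
        funext y; rw [pow_one]
      rw [this, third_swap hb x j k l]
    rw [Finset.sum_congr rfl fun l _ => by rw [h1 l], eik2 hb hU heik hx j k]
    norm_num
  | succ s ih =>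
    intro x hx j k
    -- expand the entry of H^(s+2) as a sum of products
    have hrepr : (fun y => (hess b y ^ (s + 2)) j k)
        = fun y => ∑ i, (hess b y ^ (s + 1)) j i * hess b y i k := by
      funext y; rw [pow_succ, Matrix.mul_apply]
    have hdiffE : ∀ (m : ℕ) (a c : Fin n) (y : Fin n → ℝ),
        DifferentiableAt ℝ (fun z => (hess b z ^ m) a c) y := fun m a c y =>
      diff_of_contDiff (pow_entry_contDiff hb m a c) y
    have hdiffH : ∀ (a c : Fin n) (y : Fin n → ℝ),
        DifferentiableAt ℝ (fun z => hess b z a c) y := fun a c y =>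
      diff_of_contDiff (hess_entry_contDiff hb a c) y
    have hexpand : ∀ l : Fin n, pd (fun y => (hess b y ^ (s + 2)) j k) l x
        = ∑ i, (pd (fun y => (hess b y ^ (s + 1)) j i) l x * hess b x i k
            + (hess b x ^ (s + 1)) j i * pd (fun y => hess b y i k) l x) := by
      intro l
      rw [hrepr, pd_sum (f := fun i y => (hess b y ^ (s + 1)) j i * hess b y i k) Finset.univ (fun i _ => (hdiffE (s+1) j i x).mul (hdiffH i k x)) l]
      refine Finset.sum_congr rfl fun i _ => ?_
      exact pd_mul (hdiffE (s+1) j i x) (hdiffH i k x) l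
    calc ∑ l, pd b l x * pd (fun y => (hess b y ^ (s + 2)) j k) l x
        = ∑ i, ((∑ l, pd b l x * pd (fun y => (hess b y ^ (s + 1)) j i) l x) * hess b x i k
            + (hess b x ^ (s + 1)) j i * (∑ l, pd b l x * pd (fun y => hess b y i k) l x)) := by
          rw [Finset.sum_congr rfl fun l _ => by
            rw [hexpand l, Finset.mul_sum]]
          rw [Finset.sum_comm]
          refine Finset.sum_congr rfl fun i _ => ?_
          simp only [mul_add, Finset.sum_add_distrib]
          congr 1
          · rw [Finset.sum_mul]
            exact Finset.sum_congr rfl fun l _ => by ring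
          · rw [Finset.mul_sum]
            exact Finset.sum_congr rfl fun l _ => by ring
      _ = ∑ i, (-((s + 1 : ℕ) : ℝ) * (hess b x ^ (s + 2)) j i * hess b x i k
            + (hess b x ^ (s + 1)) j i * (-((hess b x ^ 2) i k))) := by
          refine Finset.sum_congr rfl fun i _ => ?_
          rw [ih x hx j i]
          congr 1
          congr 1
          have h3 : ∀ l, pd (fun y => hess b y i k) l x = pd (pd (pd b l) k) i x :=
            fun l => third_swap hb x i k l
          rw [Finset.sum_congr rfl fun l _ => by rw [h3 l]]
          exact eik2 hb hU heik hx i k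
      _ = -((s + 2 : ℕ) : ℝ) * (hess b x ^ (s + 3)) j k := by
          rw [Finset.sum_add_distrib]
          have e1 : ∑ i, -((s + 1 : ℕ) : ℝ) * (hess b x ^ (s + 2)) j i * hess b x i k
              = -((s + 1 : ℕ) : ℝ) * (hess b x ^ (s + 3)) j k := by
            have hrw : (hess b x ^ (s+3)) j k = ∑ i, (hess b x ^ (s+2)) j i * hess b x i k := by
              rw [show (s+3) = (s+2)+1 by ring, pow_succ, Matrix.mul_apply]
            rw [hrw, Finset.mul_sum]
            exact Finset.sum_congr rfl fun i _ => by ring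
          have e2 : ∑ i, (hess b x ^ (s + 1)) j i * (-((hess b x ^ 2) i k))
              = -((hess b x ^ (s + 3)) j k) := by
            have hrw : (hess b x ^ (s+3)) j k = ∑ i, (hess b x ^ (s+1)) j i * (hess b x ^ 2) i k := by
              rw [show (s+3) = (s+1)+2 by ring, pow_add, Matrix.mul_apply]
            rw [hrw, ← neg_one_mul, Finset.mul_sum]
            exact Finset.sum_congr rfl fun i _ => by ring
          rw [e1, e2]
          push_cast
          ring

lemma keyTrace (hb : ContDiff ℝ (⊤ : ℕ∞) b) (hU : IsOpen U)
    (heik : ∀ x ∈ U, ∑ k, (pd b k x) ^ 2 = 1) (s : ℕ) {x : Fin n → ℝ} (hx : x ∈ U) :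
    ∑ l, pd (fun y => Matrix.trace (hess b y ^ (s + 1))) l x * pd b l x
      = -((s + 1 : ℕ) : ℝ) * Matrix.trace (hess b x ^ (s + 2)) := by
  have htr : ∀ m : ℕ, (fun y => Matrix.trace (hess b y ^ m))
      = fun y => ∑ j, (hess b y ^ m) j j := by
    intro m; funext y; rw [Matrix.trace]; rfl
  calc ∑ l, pd (fun y => Matrix.trace (hess b y ^ (s+1))) l x * pd b l x
      = ∑ l, (∑ j, pd (fun y => (hess b y ^ (s+1)) j j) l x) * pd b l x := by
        refine Finset.sum_congr rfl fun l _ => ?_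
        rw [htr, pd_sum Finset.univ (fun j _ =>
          diff_of_contDiff (pow_entry_contDiff hb (s+1) j j) x) l]
    _ = ∑ j, ∑ l, pd b l x * pd (fun y => (hess b y ^ (s+1)) j j) l x := by
        rw [Finset.sum_comm]
        refine Finset.sum_congr rfl fun l _ => ?_
        rw [Finset.sum_mul]
        refine Finset.sum_congr rfl fun j _ => ?_; ring
    _ = ∑ j, -((s + 1 : ℕ) : ℝ) * (hess b x ^ (s + 2)) j j := by
        refine Finset.sum_congr rfl fun j _ => keyF hb hU heik s x hx j j
    _ = -((s + 1 : ℕ) : ℝ) * Matrix.trace (hess b x ^ (s + 2)) := by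
        rw [← Finset.mul_sum]
        congr 1

end key

lemma pd_const_mul {n : ℕ} {f : (Fin n → ℝ) → ℝ} {x : Fin n → ℝ}
    (hf : DifferentiableAt ℝ f x) (c : ℝ) (i : Fin n) :
    pd (fun y => c * f y) i x = c * pd f i x := by
  unfold pd; rw [fderiv_const_mul hf]; simp


/-- If `b` is smooth and satisfies the eikonal identity `‖∇b‖ = 1` on an open set,
then all iterated normal derivatives of the mean curvature satisfy
`∂_ν^J κ = (-1)^J · J! · tr(H^{J+1})`. -/
theorem iterated_normal_deriv_mean_curvature {n : ℕ} (hn : 1 ≤ n)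
    (U : Set (Fin n → ℝ)) (hU : IsOpen U)
    (b : (Fin n → ℝ) → ℝ) (hb : ContDiff ℝ (⊤ : ℕ∞) b)
    (heik : ∀ x ∈ U, ∑ k, (pd b k x) ^ 2 = 1) :
    ∀ J : ℕ, ∀ x ∈ U,
      normalIter b J x
        = (-1 : ℝ) ^ J * (Nat.factorial J : ℝ) * Matrix.trace (hess b x ^ (J + 1)) := by
  intro J
  induction J with
  | zero =>
    intro x hx
    show Matrix.trace (hess b x) = _
    rw [pow_one]
    norm_num
  | succ J ih =>
    intro x hx
    have htrc : (fun y => Matrix.trace (hess b y ^ (J + 1)))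
        = fun y => ∑ j, (hess b y ^ (J + 1)) j j := by
      funext y; rw [Matrix.trace]; rfl
    have htrdiff : DifferentiableAt ℝ (fun y => Matrix.trace (hess b y ^ (J + 1))) x := by
      rw [htrc]
      exact diff_of_contDiff (ContDiff.sum fun j _ => pow_entry_contDiff hb (J + 1) j j) x
    have hpd : ∀ i : Fin n, pd (normalIter b J) i x
        = (-1 : ℝ) ^ J * (Nat.factorial J : ℝ)
          * pd (fun y => Matrix.trace (hess b y ^ (J + 1))) i x := by
      intro i
      have hev : normalIter b J =ᶠ[nhds x]
          fun y => (-1 : ℝ) ^ J * (Nat.factorial J : ℝ) * Matrix.trace (hess b y ^ (J + 1)) := by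
        filter_upwards [hU.mem_nhds hx] with y hy
        exact ih y hy
      rw [pd_congr hev i, pd_const_mul htrdiff]
    show ∑ i, pd (normalIter b J) i x * pd b i x = _
    calc ∑ i, pd (normalIter b J) i x * pd b i x
        = (-1 : ℝ) ^ J * (Nat.factorial J : ℝ)
          * ∑ i, pd (fun y => Matrix.trace (hess b y ^ (J + 1))) i x * pd b i x := by
          rw [Finset.mul_sum]
          exact Finset.sum_congr rfl fun i _ => by rw [hpd i]; ring
      _ = (-1 : ℝ) ^ J * (Nat.factorial J : ℝ)
          * (-((J + 1 : ℕ) : ℝ) * Matrix.trace (hess b x ^ (J + 2))) := by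
          rw [keyTrace hb hU heik J hx]
      _ = (-1 : ℝ) ^ (J + 1) * (Nat.factorial (J + 1) : ℝ)
          * Matrix.trace (hess b x ^ (J + 1 + 1)) := by
          rw [Nat.factorial_succ]
          push_cast
          ring
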